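/- Let χ : G → ℂ^× be a continuous group homomorphism on the restricted direct product G = ∏'_ν G_ν. Then χ is trivial on H_ν for all but finitely many ν, and for every y = (y_ν)_ν ∈ G one has χ(y) = ∏_ν χ_ν(y_ν), where χ_ν denotes the restriction of χ to G_ν (embedded into G as the ν-th coordinate, with identity entries elsewhere) and all but finitely many factors of the product equal 1. -/

import Mathlib

/-!
STATEMENT 2: Let `χ : G → ℂˣ` be a continuous group homomorphism on the restricted direct
product `G = ∏'_ν G_ν`.  Then `χ` is trivial on `H_ν` for all but finitely many `ν`, and for
every `y = (y_ν)_ν ∈ G` one has `χ(y) = ∏_ν χ_ν(y_ν)`, where `χ_ν` is the restriction of `χ`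
to `G_ν` (embedded into `G` as the `ν`-th coordinate, with identity entries elsewhere) and
all but finitely many factors of the product equal `1` (so the product is a `finprod`).
-/

open Filter Topology

/-- The restricted direct product of the groups `G ν` with respect to the
subgroups `H ν`, as a subgroup of the full direct product. -/
def restrictedSubgroup {I : Type*} (G : I → Type*) [∀ ν, Group (G ν)]
    (H : ∀ ν, Subgroup (G ν)) : Subgroup (∀ ν, G ν) where
  carrier := {x | ∀ᶠ ν in Filter.cofinite, x ν ∈ H ν}
  one_mem' := by
    simp only [Set.mem_setOf_eq]
    exact Filter.Eventually.of_forall fun ν => (H ν).one_mem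
  mul_mem' := fun {a b} hx hy => by
    simp only [Set.mem_setOf_eq] at hx hy ⊢
    filter_upwards [hx, hy] with ν h1 h2 using (H ν).mul_mem h1 h2
  inv_mem' := fun {a} hx => by
    simp only [Set.mem_setOf_eq] at hx ⊢
    filter_upwards [hx] with ν h using (H ν).inv_mem h

/-- The restricted direct product, as a type. -/
def RestrictedGroupProduct {I : Type*} (G : I → Type*) [∀ ν, Group (G ν)]
    (H : ∀ ν, Subgroup (G ν)) : Type _ :=
  ↥(restrictedSubgroup G H)

instance {I : Type*} (G : I → Type*) [∀ ν, Group (G ν)] (H : ∀ ν, Subgroup (G ν)) :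
    Group (RestrictedGroupProduct G H) :=
  inferInstanceAs (Group ↥(restrictedSubgroup G H))

/-- The underlying family of an element of the restricted direct product. -/
def RestrictedGroupProduct.toPi {I : Type*} {G : I → Type*} [∀ ν, Group (G ν)]
    {H : ∀ ν, Subgroup (G ν)} (x : RestrictedGroupProduct G H) : ∀ ν, G ν :=
  x.1

/-- The embedding of `G ν` into the restricted direct product as the `ν`-th coordinate,
with identity entries elsewhere. -/
def RestrictedGroupProduct.single {I : Type*} [DecidableEq I] {G : I → Type*} [∀ ν, Group (G ν)]
    {H : ∀ ν, Subgroup (G ν)} (ν : I) (g : G ν) : RestrictedGroupProduct G H :=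
  ⟨Pi.mulSingle ν g, by
    show ∀ᶠ μ in Filter.cofinite, Pi.mulSingle ν g μ ∈ H μ
    refine Filter.eventually_cofinite.2 (Set.Finite.subset (Set.finite_singleton ν) ?_)
    intro μ hμ
    by_contra hμν
    exact hμ (by rw [Pi.mulSingle_eq_of_ne (by simpa using hμν)]; exact (H μ).one_mem)⟩

open Complex

lemma norm_exp_real_mul_I_sub_one_sq (t : ℝ) :
    ‖Complex.exp (t * I) - 1‖ ^ 2 = 2 - 2 * Real.cos t := by
  rw [Complex.sq_norm, Complex.exp_mul_I]
  simp [Complex.normSq_apply, Complex.cos_ofReal_re, Complex.sin_ofReal_re]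
  nlinarith [Real.sin_sq_add_cos_sq t]

lemma key_no_small (w : ℂ) (h : ∀ n : ℤ, ‖w ^ n - 1‖ < 1/2) : w = 1 := by
  have hw0 : w ≠ 0 := by
    intro hw; have := h 1; simp [hw] at this; norm_num at this
  -- abs w = 1
  have habs : ∀ (v : ℂ), (∀ n : ℕ, ‖v ^ n - 1‖ < 1/2) → ‖v‖ ≤ 1 := by
    intro v hv
    by_contra hgt
    push_neg at hgt
    obtain ⟨n, hn⟩ := pow_unbounded_of_one_lt (3/2 : ℝ) hgt
    have h1 : ‖v ^ n‖ ≤ ‖v ^ n - 1‖ + 1 := by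
      calc ‖v ^ n‖ = ‖(v ^ n - 1) + 1‖ := by ring_nf
        _ ≤ ‖v ^ n - 1‖ + ‖(1:ℂ)‖ := norm_add_le _ _
        _ = ‖v ^ n - 1‖ + 1 := by simp
    have h2 : ‖v ^ n‖ = ‖v‖ ^ n := by
      simp [norm_pow]
    have := hv n
    nlinarith
  have h1 : ‖w‖ ≤ 1 := habs w (fun n => by simpa using h n)
  have h2 : ‖w⁻¹‖ ≤ 1 := habs w⁻¹ (fun n => by
    have := h (-n); rwa [zpow_neg, zpow_natCast, ← inv_pow] at this)
  have habs1 : ‖w‖ = 1 := by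
    rw [norm_inv] at h2
    have hpos : 0 < ‖w‖ := norm_pos_iff.mpr hw0
    have := (inv_le_one₀ hpos).mp h2
    linarith
  set θ0 := Complex.arg w with hθ0
  have hw : w = Complex.exp (θ0 * I) := by
    conv_lhs => rw [← Complex.norm_mul_exp_arg_mul_I w]
    rw [habs1]; simp [hθ0]
  have hcos : ∀ n : ℤ, Real.cos (n * θ0) > 7/8 := by
    intro n
    have hpow : w ^ n = Complex.exp (((n : ℝ) * θ0 : ℝ) * I) := by
      rw [hw, ← Complex.exp_int_mul]
      congr 1
      push_cast
      ring
    have hn := h n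
    rw [hpow] at hn
    have hsq : ‖Complex.exp (((n:ℝ)*θ0:ℝ) * I) - 1‖^2 = 2 - 2 * Real.cos ((n:ℝ)*θ0) :=
      norm_exp_real_mul_I_sub_one_sq _
    nlinarith [norm_nonneg (Complex.exp (((n:ℝ)*θ0:ℝ)*I) - 1)]
  have hθ : θ0 = 0 := by
    by_contra hne
    set φ := |θ0| with hφ
    have hφpos : 0 < φ := abs_pos.mpr hne
    have hcosφ : ∀ n : ℕ, Real.cos (n * φ) > 7/8 := by
      intro n
      rcases abs_choice θ0 with hc | hc
      · rw [hφ, hc]; exact_mod_cast hcos n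
      · rw [hφ, hc]
        have := hcos (-n)
        rw [show ((-n : ℤ) : ℝ) * θ0 = (n : ℝ) * -θ0 by push_cast; ring] at this
        exact this
    have hπ : φ ≤ Real.pi := Complex.abs_arg_le_pi w
    have hφlt : φ < Real.pi / 3 := by
      by_contra hge
      push_neg at hge
      have hle := Real.cos_le_cos_of_nonneg_of_le_pi (by positivity : (0:ℝ) ≤ Real.pi/3) hπ hge
      have h1 := hcosφ 1
      rw [Real.cos_pi_div_three] at hle
      simp only [Nat.cast_one, one_mul] at h1
      linarith
    classical
    have hP : ∃ m : ℕ, Real.pi/3 ≤ m * φ := by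
      obtain ⟨n, hn⟩ := exists_nat_ge (Real.pi / 3 / φ)
      exact ⟨n, by rw [div_le_iff₀ hφpos] at hn; linarith⟩
    set m := Nat.find hP with hm
    have hspec : Real.pi/3 ≤ m * φ := Nat.find_spec hP
    have hm0 : m ≠ 0 := by
      intro h0
      rw [h0] at hspec
      simp at hspec
      nlinarith [Real.pi_pos]
    obtain ⟨k, hk⟩ := Nat.exists_eq_succ_of_ne_zero hm0
    have hprev : ¬ Real.pi/3 ≤ k * φ := Nat.find_min hP (by omega)
    push_neg at hprev
    have hub : (m : ℝ) * φ < 2 * Real.pi / 3 := by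
      rw [hk]
      push_cast
      nlinarith
    have hle2 : Real.cos (m * φ) ≤ 1/2 := by
      have := Real.cos_le_cos_of_nonneg_of_le_pi
        (by positivity : (0:ℝ) ≤ Real.pi/3) (by nlinarith [Real.pi_pos] : (m:ℝ)*φ ≤ Real.pi) hspec
      rwa [Real.cos_pi_div_three] at this
    linarith [hcosφ m]
  rw [hw, hθ]
  simp


theorem character_of_restrictedProduct {I : Type*} [DecidableEq I] (Iinf : Set I)
    (hIinf : Iinf.Finite)
    (G : I → Type*) [∀ ν, Group (G ν)] [∀ ν, TopologicalSpace (G ν)]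
    [∀ ν, IsTopologicalGroup (G ν)] [∀ ν, LocallyCompactSpace (G ν)] [∀ ν, T2Space (G ν)]
    (H : ∀ ν, Subgroup (G ν))
    (hHcompact : ∀ ν ∉ Iinf, IsCompact (H ν : Set (G ν)))
    (hHopen : ∀ ν ∉ Iinf, IsOpen (H ν : Set (G ν)))
    [TopologicalSpace (RestrictedGroupProduct G H)]
    [IsTopologicalGroup (RestrictedGroupProduct G H)]
    (hbasis : (nhds (1 : RestrictedGroupProduct G H)).HasBasis
      (fun N : ∀ ν, Set (G ν) =>
        (∀ ν, IsOpen (N ν) ∧ (1 : G ν) ∈ N ν) ∧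
          ∀ᶠ ν in Filter.cofinite, N ν = (H ν : Set (G ν)))
      (fun N => {x : RestrictedGroupProduct G H | ∀ ν, x.toPi ν ∈ N ν}))
    (χ : RestrictedGroupProduct G H →* ℂˣ) (hχ : Continuous χ) :
    (∀ᶠ ν in Filter.cofinite, ∀ h ∈ H ν, χ (RestrictedGroupProduct.single ν h) = 1) ∧
      ∀ y : RestrictedGroupProduct G H,
        (∀ᶠ ν in Filter.cofinite, χ (RestrictedGroupProduct.single ν (y.toPi ν)) = 1) ∧
        χ y = ∏ᶠ ν, χ (RestrictedGroupProduct.single ν (y.toPi ν)) := by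
  classical
  set U : Set ℂˣ := (Units.val) ⁻¹' (Metric.ball (1:ℂ) (1/2)) with hUdef
  have hUopen : IsOpen U := Metric.isOpen_ball.preimage Units.continuous_val
  have hU1 : (1 : ℂˣ) ∈ U := by simp [hUdef]
  have hmem : U ∈ nhds (χ 1) := by rw [map_one]; exact hUopen.mem_nhds hU1
  have hpre : χ ⁻¹' U ∈ nhds (1 : RestrictedGroupProduct G H) :=
    hχ.continuousAt.preimage_mem_nhds hmem
  obtain ⟨N, ⟨hNopen, hNH⟩, hNsub⟩ := hbasis.mem_iff.mp hpre
  have htoPi_zpow : ∀ (x : RestrictedGroupProduct G H) (n : ℤ) (ν : I),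
      (x ^ n).toPi ν = (x.toPi ν) ^ n := fun x n ν => rfl
  have hkey : ∀ x : RestrictedGroupProduct G H,
      (∀ n : ℤ, ∀ ν, (x ^ n).toPi ν ∈ N ν) → χ x = 1 := by
    intro x hx
    have hball : ∀ n : ℤ, ‖((χ x : ℂˣ) : ℂ) ^ n - 1‖ < 1/2 := by
      intro n
      have h1 : χ (x ^ n) ∈ U := hNsub (hx n)
      rw [map_zpow] at h1
      rw [hUdef] at h1
      simp only [Set.mem_preimage, Metric.mem_ball, dist_eq_norm] at h1
      rwa [Units.val_zpow_eq_zpow_val] at h1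
    exact Units.ext (key_no_small _ hball)
  have hsingle_zpow : ∀ (ν : I) (g : G ν) (n : ℤ),
      (RestrictedGroupProduct.single (H := H) ν g) ^ n = RestrictedGroupProduct.single ν (g ^ n) := by
    intro ν g n
    apply Subtype.ext
    show (Pi.mulSingle ν g : ∀ μ, G μ) ^ n = Pi.mulSingle ν (g ^ n)
    exact (map_zpow (MonoidHom.mulSingle G ν) g n).symm
  have part1 : ∀ ν, N ν = (H ν : Set (G ν)) →
      ∀ h ∈ H ν, χ (RestrictedGroupProduct.single ν h) = 1 := by
    intro ν hNν h hh
    apply hkey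
    intro n μ
    rw [hsingle_zpow]
    show Pi.mulSingle ν (h ^ n) μ ∈ N μ
    by_cases hμ : μ = ν
    · subst hμ
      rw [Pi.mulSingle_eq_same, hNν]
      exact (H μ).zpow_mem hh n
    · rw [Pi.mulSingle_eq_of_ne hμ]
      exact (hNopen μ).2
  refine ⟨by filter_upwards [hNH] with ν hν using part1 ν hν, ?_⟩
  intro y
  have hy : ∀ᶠ ν in Filter.cofinite, y.toPi ν ∈ H ν := y.2
  have heva : ∀ᶠ ν in Filter.cofinite, χ (RestrictedGroupProduct.single ν (y.toPi ν)) = 1 := by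
    filter_upwards [hNH, hy] with ν h1 h2 using part1 ν h1 _ h2
  refine ⟨heva, ?_⟩
  have hT : {ν | ¬(N ν = (H ν : Set (G ν)) ∧ y.toPi ν ∈ H ν)}.Finite :=
    Filter.eventually_cofinite.mp (hNH.and hy)
  set T : Finset I := hT.toFinset with hTdef
  have hmemT : ∀ ν, ν ∉ T → N ν = (H ν : Set (G ν)) ∧ y.toPi ν ∈ H ν := by
    intro ν hν
    by_contra hc
    exact hν (hT.mem_toFinset.mpr hc)
  have hyH : ∀ (T : Finset I),
      (fun μ => if μ ∈ T then y.toPi μ else 1) ∈ restrictedSubgroup G H := by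
    intro T
    show ∀ᶠ μ in Filter.cofinite, (if μ ∈ T then y.toPi μ else 1) ∈ H μ
    filter_upwards [hy] with μ hμ
    by_cases hc : μ ∈ T
    · rw [if_pos hc]; exact hμ
    · rw [if_neg hc]; exact (H μ).one_mem
  set e : Finset I → RestrictedGroupProduct G H :=
    fun T => ⟨fun μ => if μ ∈ T then y.toPi μ else 1, hyH T⟩ with hedef
  have hetoPi : ∀ (T : Finset I) (μ : I),
      (e T).toPi μ = if μ ∈ T then y.toPi μ else 1 := fun T μ => rfl
  have echar : ∀ T : Finset I,
      χ (e T) = ∏ ν ∈ T, χ (RestrictedGroupProduct.single ν (y.toPi ν)) := by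
    intro T
    induction T using Finset.induction_on with
    | empty =>
      have : e ∅ = 1 := by
        apply Subtype.ext
        funext μ
        show (if μ ∈ (∅ : Finset I) then y.toPi μ else 1) = 1
        simp
      rw [this, map_one, Finset.prod_empty]
    | insert a T' ha ih =>
      have hsplit : e (insert a T') = RestrictedGroupProduct.single a (y.toPi a) * e T' := by
        apply Subtype.ext
        funext μ
        show (if μ ∈ insert a T' then y.toPi μ else 1) =
          Pi.mulSingle a (y.toPi a) μ * (if μ ∈ T' then y.toPi μ else 1)
        by_cases hc : μ = a
        · subst hc
          rw [Pi.mulSingle_eq_same, if_pos (Finset.mem_insert_self μ T'), if_neg ha, mul_one]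
        · rw [Pi.mulSingle_eq_of_ne hc, one_mul]
          by_cases hc2 : μ ∈ T'
          · rw [if_pos hc2, if_pos (Finset.mem_insert_of_mem hc2)]
          · rw [if_neg hc2, if_neg (by simp [hc, hc2])]
      rw [hsplit, map_mul, ih, Finset.prod_insert ha]
  set r : RestrictedGroupProduct G H := (e T)⁻¹ * y with hrdef
  have hrtoPi : ∀ μ, r.toPi μ = if μ ∈ T then 1 else y.toPi μ := by
    intro μ
    have h0 : r.toPi μ = ((e T).toPi μ)⁻¹ * y.toPi μ := rfl
    rw [h0, hetoPi]
    by_cases hμ : μ ∈ T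
    · simp [hμ]
    · simp [hμ]
  have hχr : χ r = 1 := by
    apply hkey
    intro n μ
    rw [htoPi_zpow, hrtoPi]
    by_cases hμ : μ ∈ T
    · rw [if_pos hμ, one_zpow]
      exact (hNopen μ).2
    · rw [if_neg hμ]
      obtain ⟨hNμ, hyμ⟩ := hmemT μ hμ
      rw [hNμ]
      exact (H μ).zpow_mem hyμ n
  have hyeq : y = e T * r := by rw [hrdef, mul_inv_cancel_left]
  have hfin : ∏ᶠ ν, χ (RestrictedGroupProduct.single ν (y.toPi ν)) =
      ∏ ν ∈ T, χ (RestrictedGroupProduct.single ν (y.toPi ν)) := by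
    apply finprod_eq_prod_of_mulSupport_subset
    intro ν hν
    by_contra hc
    obtain ⟨hNν, hyν⟩ := hmemT ν hc
    exact hν (part1 ν hNν _ hyν)
  calc χ y = χ (e T * r) := by rw [← hyeq]
    _ = χ (e T) * χ r := map_mul χ _ _
    _ = χ (e T) := by rw [hχr, mul_one]
    _ = ∏ ν ∈ T, χ (RestrictedGroupProduct.single ν (y.toPi ν)) := echar T
    _ = ∏ᶠ ν, χ (RestrictedGroupProduct.single ν (y.toPi ν)) := hfin.symm
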